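/- Let η₁, …, η_p be nonnegative random variables (not necessarily independent), and t₁, …, t_p nonnegative real numbers, at least one of which is strictly positive. Suppose that for some 0 < δ < 1 and each i ≤ p, P(ηᵢ > tᵢ) ≥ 1 − δ. Then P( Σᵢ ηᵢ ≥ (1/2) Σᵢ tᵢ ) ≥ 1 − 2δ. -/

import Mathlib

open MeasureTheory

theorem stmt_4 {Ω : Type*} [MeasurableSpace Ω] (μ : Measure Ω) [IsProbabilityMeasure μ]
    (p : ℕ) (η : Fin p → Ω → ℝ) (hmeas : ∀ i, Measurable (η i))
    (hnonneg : ∀ i ω, 0 ≤ η i ω) (t : Fin p → ℝ) (ht : ∀ i, 0 ≤ t i)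
    (htpos : ∃ i, 0 < t i) (δ : ℝ) (hδ0 : 0 < δ) (hδ1 : δ < 1)
    (hP : ∀ i, ENNReal.ofReal (1 - δ) ≤ μ {ω | t i < η i ω}) :
    ENNReal.ofReal (1 - 2 * δ) ≤ μ {ω | (1/2) * ∑ i, t i ≤ ∑ i, η i ω} := by
  by_cases h2δ : 1 - 2 * δ ≤ 0
  · simp [ENNReal.ofReal_eq_zero.mpr h2δ]
  push_neg at h2δ
  have hδ2 : 2 * δ < 1 := by linarith
  set S : ℝ := ∑ i, t i with hSdef
  have hS : 0 < S := by
    obtain ⟨i, hi⟩ := htpos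
    exact Finset.sum_pos' (fun j _ => ht j) ⟨i, Finset.mem_univ i, hi⟩
  -- g ω = ∑ t i * 1{η i ω ≤ t i}
  set g : Ω → ℝ := fun ω => ∑ i, if η i ω ≤ t i then t i else 0 with hgdef
  have hg0 : ∀ ω, 0 ≤ g ω := fun ω =>
    Finset.sum_nonneg fun i _ => by split <;> simp [ht i]
  have hmeasle : ∀ i, MeasurableSet {ω | η i ω ≤ t i} :=
    fun i => measurableSet_le (hmeas i) measurable_const
  have hgmeas : Measurable g := Finset.measurable_sum _ fun i _ =>
    Measurable.ite (hmeasle i) measurable_const measurable_const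
  -- measure of {η i ≤ t i} is at most δ
  have hsmall : ∀ i, μ {ω | η i ω ≤ t i} ≤ ENNReal.ofReal δ := by
    intro i
    have hc : {ω | η i ω ≤ t i} = {ω | t i < η i ω}ᶜ := by
      ext ω; simp [not_lt]
    rw [hc, prob_compl_eq_one_sub (measurableSet_lt measurable_const (hmeas i))]
    have key : (1 : ENNReal) - ENNReal.ofReal (1 - δ) = ENNReal.ofReal δ := by
      rw [← ENNReal.ofReal_one, ← ENNReal.ofReal_sub _ (by linarith)]
      norm_num
    calc (1 : ENNReal) - μ {ω | t i < η i ω} ≤ 1 - ENNReal.ofReal (1 - δ) :=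
          tsub_le_tsub_left (hP i) 1
      _ = ENNReal.ofReal δ := key
  -- expectation bound
  have hlint : ∫⁻ ω, ENNReal.ofReal (g ω) ∂μ ≤ ENNReal.ofReal δ * ENNReal.ofReal S := by
    have heq : ∀ ω, ENNReal.ofReal (g ω) =
        ∑ i, Set.indicator {ω' | η i ω' ≤ t i} (fun _ => ENNReal.ofReal (t i)) ω := by
      intro ω
      rw [hgdef]
      rw [ENNReal.ofReal_sum_of_nonneg (fun i _ => by split <;> simp [ht i])]
      refine Finset.sum_congr rfl fun i _ => ?_
      by_cases h : η i ω ≤ t i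
      · simp [Set.indicator_of_mem, h, Set.mem_setOf_eq]
      · simp [Set.indicator_of_notMem, h, Set.mem_setOf_eq]
    calc ∫⁻ ω, ENNReal.ofReal (g ω) ∂μ
        = ∑ i, ∫⁻ ω, Set.indicator {ω' | η i ω' ≤ t i} (fun _ => ENNReal.ofReal (t i)) ω ∂μ := by
          simp_rw [heq]
          exact lintegral_finset_sum _ fun i _ =>
            Measurable.indicator measurable_const (hmeasle i)
      _ = ∑ i, ENNReal.ofReal (t i) * μ {ω' | η i ω' ≤ t i} := by
          refine Finset.sum_congr rfl fun i _ => ?_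
          rw [lintegral_indicator_const (hmeasle i)]
      _ ≤ ∑ i, ENNReal.ofReal (t i) * ENNReal.ofReal δ :=
          Finset.sum_le_sum fun i _ => mul_le_mul_right (hsmall i) _
      _ = ENNReal.ofReal δ * ENNReal.ofReal S := by
          rw [← Finset.sum_mul, mul_comm, ← ENNReal.ofReal_sum_of_nonneg fun i _ => ht i]
  -- Markov
  set ε : ENNReal := ENNReal.ofReal (S / 2) with hεdef
  have hε0 : ε ≠ 0 := by
    simp [hεdef, ENNReal.ofReal_eq_zero, not_le]; linarith
  have hεtop : ε ≠ ⊤ := ENNReal.ofReal_ne_top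
  have hmarkov : μ {ω | ε ≤ ENNReal.ofReal (g ω)} ≤ ENNReal.ofReal (2 * δ) := by
    have h1 : ε * μ {ω | ε ≤ ENNReal.ofReal (g ω)} ≤ ∫⁻ ω, ENNReal.ofReal (g ω) ∂μ :=
      mul_meas_ge_le_lintegral₀ (hgmeas.ennreal_ofReal.aemeasurable) ε
    have h2 : ENNReal.ofReal δ * ENNReal.ofReal S = ε * ENNReal.ofReal (2 * δ) := by
      rw [hεdef, ← ENNReal.ofReal_mul (by linarith), ← ENNReal.ofReal_mul (by positivity)]
      ring_nf
    have h3 : ε * μ {ω | ε ≤ ENNReal.ofReal (g ω)} ≤ ε * ENNReal.ofReal (2 * δ) := by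
      calc ε * μ {ω | ε ≤ ENNReal.ofReal (g ω)} ≤ ENNReal.ofReal δ * ENNReal.ofReal S :=
            h1.trans hlint
        _ = ε * ENNReal.ofReal (2 * δ) := h2
    exact (ENNReal.mul_le_mul_iff_right hε0 hεtop).mp h3
  -- complement inclusion
  have hsub : {ω | ε ≤ ENNReal.ofReal (g ω)}ᶜ ⊆ {ω | (1/2) * ∑ i, t i ≤ ∑ i, η i ω} := by
    intro ω hω
    simp only [Set.mem_compl_iff, Set.mem_setOf_eq, not_le] at hω
    have hglt : g ω < S / 2 := by
      by_contra h
      push_neg at h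
      exact absurd (ENNReal.ofReal_le_ofReal h) (not_le.mpr hω)
    have hbound : S - g ω ≤ ∑ i, η i ω := by
      have : ∀ i ∈ Finset.univ, t i - (if η i ω ≤ t i then t i else 0) ≤ η i ω := by
        intro i _
        by_cases h : η i ω ≤ t i
        · simp [h, hnonneg i ω]
        · push_neg at h; simp [not_le.mpr h]; linarith
      calc S - g ω = ∑ i, (t i - (if η i ω ≤ t i then t i else 0)) := by
            rw [hgdef, Finset.sum_sub_distrib]
        _ ≤ ∑ i, η i ω := Finset.sum_le_sum this
    simp only [Set.mem_setOf_eq]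
    calc (1/2) * S ≤ S - g ω := by linarith
      _ ≤ ∑ i, η i ω := hbound
  -- conclude
  have hcover : (1 : ENNReal) ≤ μ {ω | (1/2) * ∑ i, t i ≤ ∑ i, η i ω}
      + μ {ω | ε ≤ ENNReal.ofReal (g ω)} := by
    have : (Set.univ : Set Ω) ⊆ {ω | (1/2) * ∑ i, t i ≤ ∑ i, η i ω}
        ∪ {ω | ε ≤ ENNReal.ofReal (g ω)} := by
      intro ω _
      by_cases h : ε ≤ ENNReal.ofReal (g ω)
      · exact Or.inr h
      · exact Or.inl (hsub h)
    calc (1 : ENNReal) = μ Set.univ := (measure_univ).symm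
      _ ≤ μ ({ω | (1/2) * ∑ i, t i ≤ ∑ i, η i ω} ∪ {ω | ε ≤ ENNReal.ofReal (g ω)}) :=
          measure_mono this
      _ ≤ _ := measure_union_le _ _
  have hfin : ENNReal.ofReal (1 - 2 * δ) + ENNReal.ofReal (2 * δ) = 1 := by
    rw [← ENNReal.ofReal_add (by linarith) (by linarith)]
    norm_num
  have : ENNReal.ofReal (1 - 2 * δ) + μ {ω | ε ≤ ENNReal.ofReal (g ω)}
      ≤ μ {ω | (1/2) * ∑ i, t i ≤ ∑ i, η i ω} + μ {ω | ε ≤ ENNReal.ofReal (g ω)} := by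
    calc ENNReal.ofReal (1 - 2 * δ) + μ {ω | ε ≤ ENNReal.ofReal (g ω)}
        ≤ ENNReal.ofReal (1 - 2 * δ) + ENNReal.ofReal (2 * δ) :=
          add_le_add_right hmarkov _
      _ = 1 := hfin
      _ ≤ _ := hcover
  exact (ENNReal.add_le_add_iff_right (measure_ne_top μ _)).mp this
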